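/- With the notation above, ev(Cτ) = 1 − v^{-2}, and for every integer n ≥ 2 the monomial v^{2n}z^0 occurs in ev((Cτ)^n) with coefficient 1 while every other monomial occurring in ev((Cτ)^n) has v-exponent strictly less than 2n. -/

import Mathlib

/- R = ℤ[v^{±1}, z^{±1}] modelled as the group algebra of ℤ × ℤ over ℤ:
   the coefficient of v^i z^j in P is `P (i, j)`. -/
noncomputable section

abbrev R2 : Type := AddMonoidAlgebra ℤ (ℤ × ℤ)

/-- `v` -/
def V : R2 := AddMonoidAlgebra.single (1, 0) 1
/-- `v⁻¹` -/
def Vi : R2 := AddMonoidAlgebra.single (-1, 0) 1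
/-- `z` -/
def Z : R2 := AddMonoidAlgebra.single (0, 1) 1
/-- `z⁻¹` -/
def Zi : R2 := AddMonoidAlgebra.single (0, -1) 1
/-- `δ = (v⁻¹ - v) z⁻¹` -/
def δR : R2 := (Vi - V) * Zi

variable {A : Type*} [Ring A] [Algebra R2 A]

/-- `c = v⁻¹ σ` -/
def cOf (σ : Aˣ) : A := Vi • (σ : A)
/-- `c⁻¹ = v σ⁻¹` -/
def cInvOf (σ : Aˣ) : A := V • ((σ⁻¹ : Aˣ) : A)
/-- `C = c₁ c₃` -/
def COf (σ₁ σ₃ : Aˣ) : A := cOf σ₁ * cOf σ₃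
/-- `τ = (-zv) h` -/
def τOf (h : A) : A := (-(Z * V)) • h

/-! ### Auxiliary: coefficient bounds for Laurent polynomials -/

/-- all monomials have v-exponent ≤ m -/
def Bd (P : R2) (m : ℤ) : Prop := ∀ q : ℤ × ℤ, P.coeff q ≠ 0 → q.1 ≤ m

/-- the coefficient of `v^m z^0` is 1 and all other monomials have v-exponent < m -/
def Tops (P : R2) (m : ℤ) : Prop :=
  P.coeff (m, 0) = 1 ∧ ∀ q : ℤ × ℤ, P.coeff q ≠ 0 → q = (m, 0) ∨ q.1 < m

lemma Tops.bd {P : R2} {m : ℤ} (h : Tops P m) : Bd P m := fun q hq => by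
  rcases h.2 q hq with h | h
  · simp [h]
  · exact h.le

lemma Bd.mono {P : R2} {m m' : ℤ} (h : Bd P m) (hm : m ≤ m') : Bd P m' :=
  fun q hq => (h q hq).trans hm

lemma mul_exists {P Q : R2} {q : ℤ × ℤ} (h : (P * Q).coeff q ≠ 0) :
    ∃ a b : ℤ × ℤ, P.coeff a ≠ 0 ∧ Q.coeff b ≠ 0 ∧ a + b = q := by
  classical
  have hq : q ∈ (P * Q).coeff.support := Finsupp.mem_support_iff.2 h
  have h2 := AddMonoidAlgebra.support_coeff_mul_subset P Q hq
  rw [Finset.mem_add] at h2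
  obtain ⟨a, ha, b, hb, hab⟩ := h2
  exact ⟨a, b, Finsupp.mem_support_iff.1 ha, Finsupp.mem_support_iff.1 hb, hab⟩

lemma Bd.mul {P Q : R2} {m k : ℤ} (hP : Bd P m) (hQ : Bd Q k) : Bd (P * Q) (m + k) := by
  intro q hq
  obtain ⟨a, b, ha, hb, rfl⟩ := mul_exists hq
  have := hP a ha; have := hQ b hb
  simp only [Prod.fst_add]; omega

lemma tops_mul_coeff {P Q : R2} {m k : ℤ} (hP : Tops P m) (hQ : Tops Q k) :
    (P * Q).coeff (m + k, 0) = 1 := by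
  classical
  rw [AddMonoidAlgebra.coeff_mul, Finsupp.sum]
  rw [Finset.sum_eq_single ((m, 0) : ℤ × ℤ)]
  · rw [Finsupp.sum, Finset.sum_eq_single ((k, 0) : ℤ × ℤ)]
    · rw [if_pos (by simp [Prod.ext_iff]), hP.1, hQ.1, one_mul]
    · intro b hb hbne
      rw [if_neg]
      intro he
      have hb1 : b.1 < k := by
        rcases hQ.2 b (Finsupp.mem_support_iff.1 hb) with h | h
        · exact absurd h hbne
        · exact h
      have := congrArg Prod.fst he
      simp at this; omega
    · intro hk
      rw [Finsupp.notMem_support_iff.1 hk, mul_zero, if_pos (by simp [Prod.ext_iff])]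
  · intro a ha hane
    have ha1 : a.1 < m := by
      rcases hP.2 a (Finsupp.mem_support_iff.1 ha) with h | h
      · exact absurd h hane
      · exact h
    rw [Finsupp.sum]
    apply Finset.sum_eq_zero
    intro b hb
    rw [if_neg]
    intro he
    have hb1 : b.1 ≤ k := hQ.bd b (Finsupp.mem_support_iff.1 hb)
    have := congrArg Prod.fst he
    simp at this; omega
  · intro hm
    exact absurd hP.1 (by rw [Finsupp.notMem_support_iff.1 hm]; exact zero_ne_one)

lemma Tops.mul {P Q : R2} {m k : ℤ} (hP : Tops P m) (hQ : Tops Q k) : Tops (P * Q) (m + k) := by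
  refine ⟨tops_mul_coeff hP hQ, ?_⟩
  intro q hq
  obtain ⟨a, b, ha, hb, rfl⟩ := mul_exists hq
  rcases hP.2 a ha with h1 | h1
  · rcases hQ.2 b hb with h2 | h2
    · left; rw [h1, h2]; simp [Prod.ext_iff]
    · right; have := hP.bd a ha; simp only [Prod.fst_add]; omega
  · right; have := hQ.bd b hb; simp only [Prod.fst_add]; omega

lemma tops_one : Tops 1 0 := by
  constructor
  · rw [AddMonoidAlgebra.one_def, AddMonoidAlgebra.coeff_single, Finsupp.single_apply, if_pos (by simp [Prod.ext_iff])]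
  · intro q hq
    left
    rw [AddMonoidAlgebra.one_def, AddMonoidAlgebra.coeff_single, Finsupp.single_apply] at hq
    by_contra hne
    rw [if_neg (by simpa [eq_comm, Prod.ext_iff] using hne)] at hq
    exact hq rfl

lemma Tops.pow {P : R2} {m : ℤ} (hP : Tops P m) : ∀ n : ℕ, Tops (P ^ n) (n * m)
  | 0 => by simpa using tops_one
  | (n + 1) => by
    have h1 := (Tops.pow hP n).mul hP
    rw [← pow_succ] at h1
    have h2 : ((n + 1 : ℕ) : ℤ) * m = ↑n * m + m := by push_cast; ring
    rw [h2]; exact h1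

lemma Bd.add_tops {P Q : R2} {m m' : ℤ} (hP : Bd P m') (hQ : Tops Q m) (hlt : m' < m) :
    Tops (P + Q) m := by
  constructor
  · have hP0 : P.coeff (m, 0) = 0 := by
      by_contra h0
      exact absurd (hP _ h0) (by simp; omega)
    rw [AddMonoidAlgebra.coeff_add, Finsupp.add_apply, hP0, hQ.1, zero_add]
  · intro q hq
    rw [AddMonoidAlgebra.coeff_add, Finsupp.add_apply] at hq
    by_cases hq1 : P.coeff q = 0
    · rw [hq1, zero_add] at hq
      exact hQ.2 q hq
    · right; exact lt_of_le_of_lt (hP q hq1) hlt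

/-! ### Auxiliary: scalar identities -/

lemma hViV : Vi * V = 1 := by
  rw [Vi, V, AddMonoidAlgebra.single_mul_single,
    show ((-1, 0) : ℤ × ℤ) + (1, 0) = 0 by norm_num [Prod.ext_iff], one_mul,
    ← AddMonoidAlgebra.one_def]

lemma hZZi : Z * Zi = 1 := by
  rw [Z, Zi, AddMonoidAlgebra.single_mul_single,
    show ((0, 1) : ℤ × ℤ) + (0, -1) = 0 by norm_num [Prod.ext_iff], one_mul,
    ← AddMonoidAlgebra.one_def]

lemma hVV : V * V = AddMonoidAlgebra.single ((2, 0) : ℤ × ℤ) (1 : ℤ) := by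
  rw [V, AddMonoidAlgebra.single_mul_single]; norm_num

lemma hZZ : Z * Z = AddMonoidAlgebra.single ((0, 2) : ℤ × ℤ) (1 : ℤ) := by
  rw [Z, AddMonoidAlgebra.single_mul_single]; norm_num

lemma hVi2 : Vi * Vi = AddMonoidAlgebra.single ((-2, 0) : ℤ × ℤ) (1 : ℤ) := by
  rw [Vi, AddMonoidAlgebra.single_mul_single]; norm_num

lemma s3 : (-(Z * Vi)) * δR = 1 - Vi ^ 2 := by
  rw [δR]; linear_combination (1 : R2) * hViV + (Vi * V - Vi ^ 2) * hZZi

lemma s4 : -(Z * Vi) * ((V * Z) + (V * V) * δR) = V * V - 1 - Z * Z := by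
  rw [δR]
  linear_combination (-(Z * Zi) - Z * Z - V * Vi * Z * Zi + V * V * Z * Zi) * hViV +
    (-1 + V * V) * hZZi

lemma s5 : (Z * Z) * ((V * Z) * δR + (V * V) * δR ^ 2) = (V * V - 1) * (V * V - 1 - Z * Z) := by
  rw [δR]
  linear_combination (Z^2*Zi^2 + Z^3*Zi + V*Vi*Z^2*Zi^2 - 2*V^2*Z^2*Zi^2) * hViV +
    (1 + Z*Zi + Z^2 - 2*V^2 - 2*V^2*Z*Zi - V^2*Z^2 + V^4 + V^4*Z*Zi) * hZZi

/-! ### Auxiliary: concrete coefficient facts -/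

lemma apply_single_sub_single {a b q : ℤ × ℤ} {r s : ℤ} (_hab : a ≠ b) :
    (AddMonoidAlgebra.single a r - AddMonoidAlgebra.single b s : R2).coeff q ≠ 0 →
    q = a ∨ q = b := by
  intro h
  by_contra hc
  push_neg at hc
  rw [AddMonoidAlgebra.coeff_sub, Finsupp.sub_apply, AddMonoidAlgebra.coeff_single,
    AddMonoidAlgebra.coeff_single, Finsupp.single_apply, Finsupp.single_apply,
    if_neg (fun he => hc.1 (he.symm)), if_neg (fun he => hc.2 (he.symm))] at h
  exact h (by ring)

lemma tops_VV1 : Tops (V * V - 1) 2 := by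
  rw [hVV, AddMonoidAlgebra.one_def]
  constructor
  · rw [AddMonoidAlgebra.coeff_sub, Finsupp.sub_apply, AddMonoidAlgebra.coeff_single,
      AddMonoidAlgebra.coeff_single, Finsupp.single_apply, Finsupp.single_apply,
      if_pos rfl, if_neg (by norm_num [Prod.ext_iff]), sub_zero]
  · intro q hq
    rcases apply_single_sub_single (by norm_num [Prod.ext_iff]) hq with h | h
    · left; exact h
    · right; rw [h]; norm_num

lemma tops_beta : Tops (V * V - 1 - Z * Z) 2 := by
  constructor
  · rw [AddMonoidAlgebra.coeff_sub, Finsupp.sub_apply, hZZ, AddMonoidAlgebra.coeff_single,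
      Finsupp.single_apply, if_neg (by norm_num [Prod.ext_iff])]
    rw [sub_zero]
    exact tops_VV1.1
  · intro q hq
    rw [AddMonoidAlgebra.coeff_sub, Finsupp.sub_apply] at hq
    by_cases h1 : (V * V - 1 : R2).coeff q = 0
    · rw [h1, zero_sub, neg_ne_zero, hZZ, AddMonoidAlgebra.coeff_single,
          Finsupp.single_apply] at hq
      right
      by_contra hc
      rw [if_neg] at hq
      · exact hq rfl
      · intro he; rw [← he] at hc; norm_num at hc
    · exact tops_VV1.2 q h1

lemma bd_e1 : Bd (1 - Vi ^ 2) 0 := by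
  intro q hq
  rw [sq, hVi2, AddMonoidAlgebra.one_def] at hq
  rcases apply_single_sub_single (by norm_num [Prod.ext_iff]) hq with h | h <;>
    rw [h] <;> norm_num

lemma bd_negZZ : Bd (-(Z * Z)) 0 := by
  intro q hq
  rw [AddMonoidAlgebra.coeff_neg, Finsupp.neg_apply, neg_ne_zero, hZZ,
    AddMonoidAlgebra.coeff_single, Finsupp.single_apply] at hq
  by_contra hc
  rw [if_neg] at hq
  · exact hq rfl
  · intro he; rw [← he] at hc; norm_num at hc

theorem statement9 (A : Type*) [Ring A] [Algebra R2 A]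
    (σ₁ σ₃ : Aˣ) (h H : A)
    (hcomm : (σ₁ : A) * σ₃ = (σ₃ : A) * σ₁)
    (hskein1 : Vi • (σ₁ : A) - V • ((σ₁⁻¹ : Aˣ) : A) = Z • (1 : A))
    (hskein3 : Vi • (σ₃ : A) - V • ((σ₃⁻¹ : Aˣ) : A) = Z • (1 : A))
    (hH1 : (σ₁ : A) * H = (σ₃ : A) * H)
    (hH2 : H * (σ₁ : A) = H * (σ₃ : A))
    (hHdef : H = h * (σ₁ : A) * ((σ₃⁻¹ : Aˣ) : A) * h)
    (hh2 : h * h = δR • h)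
    (hh : h * (σ₁ : A) * h = h)
    (ev : A →ₗ[R2] R2)
    (htrace : ∀ x y : A, ev (x * y) = ev (y * x))
    (hev1 : ev 1 = δR ^ 4)
    (hevσ₁ : ev (σ₁ : A) = δR ^ 3)
    (hevσ₃ : ev (σ₃ : A) = δR ^ 3)
    (hevh : ev h = δR ^ 3)
    (hevσ₁σ₃ : ev ((σ₁ : A) * σ₃) = δR ^ 2)
    (hevσ₁h : ev ((σ₁ : A) * h) = δR ^ 2)
    (hevσ₃h : ev ((σ₃ : A) * h) = δR ^ 2)
    (hevH : ev H = δR ^ 2)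
    (hevσ₁σ₃h : ev ((σ₁ : A) * σ₃ * h) = δR)
    (hevσ₁H : ev ((σ₁ : A) * H) = δR)
    :
    ev (COf σ₁ σ₃ * τOf h) = 1 - Vi ^ 2 ∧
    ∀ n : ℕ, 2 ≤ n →
      (ev ((COf σ₁ σ₃ * τOf h) ^ n)).coeff ((2 * n : ℤ), 0) = 1 ∧
      ∀ i j : ℤ, (ev ((COf σ₁ σ₃ * τOf h) ^ n)).coeff (i, j) ≠ 0 →
        (i, j) ≠ ((2 * n : ℤ), 0) → i < 2 * n := by
  have hVVi : V * Vi = 1 := by rw [mul_comm]; exact hViV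
  set x : A := COf σ₁ σ₃ * τOf h with hxdef
  -- x = -(z v⁻¹) • (σ₁ σ₃ h)
  have hx : x = (-(Z * Vi)) • ((σ₁ : A) * σ₃ * h) := by
    rw [hxdef, COf, cOf, cOf, τOf]
    simp only [smul_mul_assoc, mul_smul_comm, smul_smul]
    congr 1
    linear_combination (-(Z * Vi)) * hViV
  -- σ₃ expansion from the skein relation
  have e2 : (σ₃ : A) = (V * Z) • (1 : A) + (V * V) • ((σ₃⁻¹ : Aˣ) : A) := by
    have h0 := congrArg (fun w : A => V • w) hskein3
    simp only [smul_sub, smul_smul, hVVi, one_smul] at h0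
    rw [sub_eq_iff_eq_add] at h0
    exact h0
  have e2b : (σ₃ : A) * σ₃ = (V * Z) • (σ₃ : A) + (V * V) • (1 : A) := by
    nth_rewrite 1 [e2]
    rw [add_mul, smul_mul_assoc, smul_mul_assoc, one_mul, Units.inv_mul]
  have e3 : h * (σ₁ : A) * σ₃ * h = (V * Z) • h + (V * V) • H := by
    nth_rewrite 1 [e2]
    rw [mul_add, add_mul, mul_smul_comm, mul_smul_comm, smul_mul_assoc, smul_mul_assoc,
      mul_one, hh, ← hHdef]
  have e4 : ((σ₁ : A) * σ₃ * h) * ((σ₁ : A) * σ₃ * h)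
      = (V * Z) • ((σ₁ : A) * σ₃ * h) + (V * V) • ((σ₁ : A) * σ₃ * H) := by
    calc ((σ₁ : A) * σ₃ * h) * ((σ₁ : A) * σ₃ * h)
        = (σ₁ : A) * σ₃ * (h * σ₁ * σ₃ * h) := by
          rw [mul_assoc ((σ₁ : A) * σ₃) h]
          rw [← mul_assoc h, ← mul_assoc h]
      _ = (V * Z) • ((σ₁ : A) * σ₃ * h) + (V * V) • ((σ₁ : A) * σ₃ * H) := by
          rw [e3, mul_add, mul_smul_comm, mul_smul_comm]
  -- right-associated versions of hh, hh2
  have hh' : h * ((σ₁ : A) * h) = h := by rw [← mul_assoc]; exact hh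
  have e5 : H * (σ₁ : A) * h = H := by
    rw [hHdef]
    simp only [mul_assoc]
    rw [hh']
  have e6 : H * h = δR • H := by
    rw [hHdef]
    simp only [mul_assoc]
    rw [hh2]
    simp only [mul_smul_comm]
  have e7 : H * ((σ₁ : A) * σ₃) = (V * Z) • (H * σ₁) + (V * V) • H := by
    rw [← mul_assoc, hH2, mul_assoc, e2b, mul_add, mul_smul_comm, mul_smul_comm,
      mul_one]
  have e8 : ((σ₁ : A) * σ₃ * H) * ((σ₁ : A) * σ₃ * h)
      = ((V * Z) + (V * V) * δR) • ((σ₁ : A) * σ₃ * H) := by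
    calc ((σ₁ : A) * σ₃ * H) * ((σ₁ : A) * σ₃ * h)
        = (σ₁ : A) * σ₃ * ((H * ((σ₁ : A) * σ₃)) * h) := by
          simp only [mul_assoc]
      _ = (σ₁ : A) * σ₃ * (((V * Z) • (H * σ₁) + (V * V) • H) * h) := by rw [e7]
      _ = (V * Z) • ((σ₁ : A) * σ₃ * (H * σ₁ * h)) + (V * V) • ((σ₁ : A) * σ₃ * (H * h)) := by
          rw [add_mul, smul_mul_assoc, smul_mul_assoc, mul_add, mul_smul_comm, mul_smul_comm]
      _ = ((V * Z) + (V * V) * δR) • ((σ₁ : A) * σ₃ * H) := by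
          rw [e5, e6, mul_smul_comm, smul_smul, add_smul]
  -- u * x
  have hux : ((σ₁ : A) * σ₃ * H) * x = (V * V - 1 - Z * Z) • ((σ₁ : A) * σ₃ * H) := by
    rw [hx, mul_smul_comm, e8, smul_smul, s4]
  -- the key recursion in A
  have hb1 : (-(Z * Vi)) * (-(Z * Vi)) * (V * Z) = (-(Z * Z)) * (-(Z * Vi)) := by
    linear_combination (Z ^ 3 * Vi) * hViV
  have hb2 : (-(Z * Vi)) * (-(Z * Vi)) * (V * V) = Z * Z := by
    linear_combination (Z ^ 2 * (Vi * V + 1)) * hViV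
  have key : ∀ n : ℕ, x ^ (n + 2) = (-(Z * Z)) • x ^ (n + 1) +
      ((V * V - 1 - Z * Z) ^ n * (Z * Z)) • ((σ₁ : A) * σ₃ * H) := by
    intro n
    induction n with
    | zero =>
      rw [pow_two, pow_one, pow_zero, one_mul]
      rw [hx, smul_mul_assoc, mul_smul_comm, smul_smul, e4, smul_add, smul_smul, smul_smul,
        hb1, hb2, ← smul_smul]
    | succ n ih =>
      have hp : n + 1 + 2 = (n + 2) + 1 := by omega
      rw [hp, pow_succ x (n + 2), ih, add_mul, smul_mul_assoc, smul_mul_assoc,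
        ← pow_succ x (n + 1), hux,
        smul_smul,
        show (V * V - 1 - Z * Z) ^ n * (Z * Z) * (V * V - 1 - Z * Z)
          = (V * V - 1 - Z * Z) ^ (n + 1) * (Z * Z) from by ring]
      rw [ih]
  -- evaluations
  have evu : ev ((σ₁ : A) * σ₃ * H) = (V * Z) * δR + (V * V) * δR ^ 2 := by
    rw [htrace ((σ₁ : A) * σ₃) H, e7,
      map_add, map_smul, map_smul, smul_eq_mul, smul_eq_mul, htrace H, hevσ₁H, hevH]
  have ev1 : ev x = 1 - Vi ^ 2 := by
    rw [hx, map_smul, smul_eq_mul, hevσ₁σ₃h, s3]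
  have evrec : ∀ n : ℕ, ev (x ^ (n + 2)) = (-(Z * Z)) * ev (x ^ (n + 1)) +
      (V * V - 1) * (V * V - 1 - Z * Z) ^ (n + 1) := by
    intro n
    rw [key n, map_add, map_smul, map_smul, smul_eq_mul, smul_eq_mul, evu]
    linear_combination ((V * V - 1 - Z * Z) ^ n) * s5
  -- the main induction on coefficients
  have main : ∀ n : ℕ, Bd (ev (x ^ (n + 1))) (2 * (n + 1) : ℤ) ∧
      (1 ≤ n → Tops (ev (x ^ (n + 1))) (2 * (n + 1) : ℤ)) := by
    intro n
    induction n with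
    | zero =>
      constructor
      · rw [pow_one, ev1]
        exact bd_e1.mono (by norm_num)
      · intro hcontra; omega
    | succ n ih =>
      have ht : Tops ((V * V - 1) * (V * V - 1 - Z * Z) ^ (n + 1)) (2 * ((n : ℤ) + 1 + 1)) := by
        have h1 := tops_VV1.mul (tops_beta.pow (n + 1))
        rw [show (2 : ℤ) + ((n + 1 : ℕ) : ℤ) * 2 = 2 * ((n : ℤ) + 1 + 1) from by
          push_cast; ring] at h1
        exact h1
      have hbd : Bd ((-(Z * Z)) * ev (x ^ (n + 1))) (2 * ((n : ℤ) + 1)) := by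
        have h1 := bd_negZZ.mul ih.1
        rwa [zero_add] at h1
      have htot := hbd.add_tops ht (by omega)
      rw [← evrec n] at htot
      exact ⟨htot.bd, fun _ => htot⟩
  refine ⟨ev1, ?_⟩
  intro n hn
  obtain ⟨m, rfl⟩ : ∃ m, n = m + 2 := ⟨n - 2, by omega⟩
  have T := (main (m + 1)).2 (by omega)
  rw [show (m + 1) + 1 = m + 2 from rfl] at T
  rw [show (2 * (((m + 1 : ℕ) : ℤ) + 1)) = 2 * ((m + 2 : ℕ) : ℤ) from by push_cast; ring] at T
  refine ⟨T.1, ?_⟩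
  intro i j hne hne2
  rcases T.2 (i, j) hne with h1 | h1
  · exact absurd h1 hne2
  · exact h1
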